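/- (Floquet normal form under uniform periodic steering.) Assume additionally that g is continuous and T-periodic for some T > 0, and define Γ(t) = ∫_0^t g(s)² ds, ℋ_t = c t H + Γ(t) δH, X = −(i/T)[ℋ_T, ·] + (Γ(T)/T) D, and P_t = exp( −i[ℋ_t − (t/T)ℋ_T, ·] + (Γ(t) − (t/T)Γ(T)) D ), with exp the exponential in the Banach algebra of linear maps on M_d(ℂ). Then the solution Λ_t = exp( −i[ℋ_t, ·] + Γ(t) D ) of the Master Equation factorizes as Λ_t = P_t ∘ e^{tX} for all t ∈ ℝ, and t ↦ P_t is T-periodic: P_{t+T} = P_t. -/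

import Mathlib

open Matrix
noncomputable section
attribute [local instance] Matrix.normedAddCommGroup Matrix.normedSpace

def adL {n : Type*} [Fintype n] [DecidableEq n] (B : Matrix n n ℂ) :
    Matrix n n ℂ →L[ℂ] Matrix n n ℂ :=
  LinearMap.toContinuousLinearMap
    ((-Complex.I) • (LinearMap.mulLeft ℂ B - LinearMap.mulRight ℂ B))

instance instIsTopologicalRingMatrixCLM (d : ℕ) :
    IsTopologicalRing (Matrix (Fin d) (Fin d) ℂ →L[ℂ] Matrix (Fin d) (Fin d) ℂ) := by
  let _ : NormedRing (Matrix (Fin d) (Fin d) ℂ →L[ℂ] Matrix (Fin d) (Fin d) ℂ) :=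
    ContinuousLinearMap.toNormedRing
  exact NonUnitalSeminormedRing.toIsTopologicalRing

variable {n : Type*} [Fintype n] [DecidableEq n]

lemma adL_apply (B ρ : Matrix n n ℂ) : adL B ρ = -Complex.I • (B*ρ - ρ*B) := rfl

lemma adL_add (A B : Matrix n n ℂ) : adL (A + B) = adL A + adL B := by
  ext ρ : 1
  simp [adL_apply, smul_sub, add_mul, mul_add]
  module

lemma adL_smul (z : ℂ) (B : Matrix n n ℂ) : adL (z • B) = z • adL B := by
  ext ρ : 1
  simp [adL_apply, smul_sub, smul_mul_assoc, mul_smul_comm, smul_smul, mul_comm]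

lemma adL_sub (A B : Matrix n n ℂ) : adL (A - B) = adL A - adL B := by
  ext ρ : 1
  simp [adL_apply, smul_sub, sub_mul, mul_sub]
  module

lemma commute_adL_adL {A B : Matrix n n ℂ} (h : A * B = B * A) :
    Commute (adL A) (adL B) := by
  apply ContinuousLinearMap.ext
  intro ρ
  simp only [ContinuousLinearMap.mul_apply, adL_apply, smul_sub, mul_sub, sub_mul,
    mul_smul_comm, smul_mul_assoc, smul_smul, mul_assoc]
  rw [← mul_assoc A B, h, mul_assoc]
  abel

lemma commute_adL_D {A : Matrix n n ℂ} {D : Matrix n n ℂ →L[ℂ] Matrix n n ℂ}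
    (h : ∀ ρ, D (A * ρ - ρ * A) = A * D ρ - D ρ * A) :
    Commute (adL A) D := by
  apply ContinuousLinearMap.ext
  intro ρ
  rw [ContinuousLinearMap.mul_apply, ContinuousLinearMap.mul_apply, adL_apply, adL_apply,
    _root_.map_smul, h]
set_option synthInstance.maxHeartbeats 1000000
set_option maxHeartbeats 1000000

instance instSMC {n : Type*} [Fintype n] [DecidableEq n] :
    SMulCommClass ℂ (Matrix n n ℂ →L[ℂ] Matrix n n ℂ) (Matrix n n ℂ →L[ℂ] Matrix n n ℂ) :=
  ⟨fun s a b => by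
    simp only [smul_eq_mul]
    ext ρ : 1
    simp [ContinuousLinearMap.mul_apply]⟩

instance instIST {n : Type*} [Fintype n] [DecidableEq n] :
    IsScalarTower ℂ (Matrix n n ℂ →L[ℂ] Matrix n n ℂ) (Matrix n n ℂ →L[ℂ] Matrix n n ℂ) :=
  ⟨fun s a b => by
    simp only [smul_eq_mul]
    ext ρ : 1
    simp [ContinuousLinearMap.mul_apply]⟩

lemma exp_add_of_commute_clm {d : ℕ}
    {x y : Matrix (Fin d) (Fin d) ℂ →L[ℂ] Matrix (Fin d) (Fin d) ℂ} (h : Commute x y) :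
    NormedSpace.exp (x + y) = NormedSpace.exp x * NormedSpace.exp y := by
  have C0 : CompleteSpace (Matrix (Fin d) (Fin d) ℂ →L[ℂ] Matrix (Fin d) (Fin d) ℂ) :=
    FiniteDimensional.complete ℂ _
  letI R : NormedRing (Matrix (Fin d) (Fin d) ℂ →L[ℂ] Matrix (Fin d) (Fin d) ℂ) :=
    ContinuousLinearMap.toNormedRing
  letI A : NormedAlgebra ℂ (Matrix (Fin d) (Fin d) ℂ →L[ℂ] Matrix (Fin d) (Fin d) ℂ) :=
    ContinuousLinearMap.toNormedAlgebra
  letI Q : NormedAlgebra ℚ (Matrix (Fin d) (Fin d) ℂ →L[ℂ] Matrix (Fin d) (Fin d) ℂ) :=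
    NormedAlgebra.restrictScalars ℚ ℂ _
  have C : @CompleteSpace (Matrix (Fin d) (Fin d) ℂ →L[ℂ] Matrix (Fin d) (Fin d) ℂ)
      (PseudoMetricSpace.toUniformSpace) := C0
  exact NormedSpace.exp_add_of_commute h

/-- Floquet normal form under uniform periodic steering: for continuous
`T`-periodic `g`, the solution `Λ_t = exp(−i[ℋ_t,·] + Γ(t)D)` factorizes as
`Λ_t = P_t ∘ e^{tX}` with `X = −(i/T)[ℋ_T,·] + (Γ(T)/T)D`,
`P_t = exp(−i[ℋ_t − (t/T)ℋ_T,·] + (Γ(t) − (t/T)Γ(T))D)`, and `t ↦ P_t` is `T`-periodic. -/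
theorem stmt17 {d : ℕ}
    (H δH : Matrix (Fin d) (Fin d) ℂ) (hH : Hᴴ = H) (hδH : δHᴴ = δH)
    (hcomm : δH * H = H * δH)
    (D : Matrix (Fin d) (Fin d) ℂ →L[ℂ] Matrix (Fin d) (Fin d) ℂ)
    (hD : ∀ ρ, D (H * ρ - ρ * H) = H * D ρ - D ρ * H)
    (c : ℝ) (g : ℝ → ℝ) (hg : Continuous g)
    (T : ℝ) (hT : 0 < T) (hper : Function.Periodic g T)
    (Γ : ℝ → ℝ) (hΓ : ∀ t, Γ t = ∫ s in (0:ℝ)..t, (g s) ^ 2)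
    (Hcal : ℝ → Matrix (Fin d) (Fin d) ℂ)
    (hHcal : ∀ t, Hcal t = ((c * t : ℝ) : ℂ) • H + ((Γ t : ℝ) : ℂ) • δH)
    (Λ : ℝ → (Matrix (Fin d) (Fin d) ℂ →L[ℂ] Matrix (Fin d) (Fin d) ℂ))
    (hΛ : ∀ t, Λ t = NormedSpace.exp (adL (Hcal t) + ((Γ t : ℝ) : ℂ) • D))
    (X : Matrix (Fin d) (Fin d) ℂ →L[ℂ] Matrix (Fin d) (Fin d) ℂ)
    (hX : X = adL (((T⁻¹ : ℝ) : ℂ) • Hcal T) + (((Γ T / T : ℝ)) : ℂ) • D)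
    (P : ℝ → (Matrix (Fin d) (Fin d) ℂ →L[ℂ] Matrix (Fin d) (Fin d) ℂ))
    (hP : ∀ t, P t = NormedSpace.exp
      (adL (Hcal t - ((t / T : ℝ) : ℂ) • Hcal T) +
        (((Γ t - (t / T) * Γ T : ℝ)) : ℂ) • D)) :
    (∀ t : ℝ, Λ t = (P t).comp (NormedSpace.exp (t • X))) ∧
    (∀ t : ℝ, P (t + T) = P t) := by
  have hT0 : (T : ℝ) ≠ 0 := ne_of_gt hT
  have hTC : (T : ℂ) ≠ 0 := by exact_mod_cast hT0
  -- Γ is "additive by period"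
  have hg2 : Continuous (fun s => g s ^ 2) := hg.pow 2
  have hg2per : Function.Periodic (fun s => g s ^ 2) T := fun x => by
    simp [hper x]
  have hΓadd : ∀ t, Γ (t + T) = Γ t + Γ T := by
    intro t
    rw [hΓ, hΓ, hΓ]
    rw [← intervalIntegral.integral_add_adjacent_intervals
      (hg2.intervalIntegrable 0 t) (hg2.intervalIntegrable t (t + T))]
    congr 1
    have := hg2per.intervalIntegral_add_eq t 0
    simpa using this
  set A := adL (H : Matrix (Fin d) (Fin d) ℂ) with hA
  set K := adL (δH : Matrix (Fin d) (Fin d) ℂ) + D with hK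
  have hAK : Commute A K := by
    exact (commute_adL_adL hcomm.symm).add_right (commute_adL_D hD)
  -- adL of Hcal
  have hadLHcal : ∀ t, adL (Hcal t) = ((c * t : ℝ) : ℂ) • A + ((Γ t : ℝ) : ℂ) • adL δH := by
    intro t
    rw [hHcal, adL_add, adL_smul, adL_smul]
  -- P generator
  have hPgen : ∀ t, adL (Hcal t - ((t / T : ℝ) : ℂ) • Hcal T) +
      (((Γ t - (t / T) * Γ T : ℝ)) : ℂ) • D
      = ((Γ t - (t / T) * Γ T : ℝ) : ℂ) • K := by
    intro t
    have hm : Hcal t - ((t / T : ℝ) : ℂ) • Hcal T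
        = ((Γ t - (t / T) * Γ T : ℝ) : ℂ) • δH := by
      rw [hHcal t, hHcal T]
      have h1 : ((c * t : ℝ) : ℂ) = ((t / T : ℝ) : ℂ) * ((c * T : ℝ) : ℂ) := by
        push_cast
        field_simp
      push_cast at h1 ⊢
      rw [smul_add, ← sub_sub, smul_smul, ← h1, smul_smul]
      module
    rw [hm, adL_smul, hK, smul_add]
  -- t • X
  have htX : ∀ t : ℝ, t • X = ((c * t : ℝ) : ℂ) • A + ((t / T * Γ T : ℝ) : ℂ) • K := by
    intro t
    rw [hX, adL_smul, hadLHcal T]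
    have hr : ∀ (Y : Matrix (Fin d) (Fin d) ℂ →L[ℂ] Matrix (Fin d) (Fin d) ℂ),
        t • Y = ((t : ℝ) : ℂ) • Y := fun Y => (Complex.coe_smul t Y).symm
    rw [hr]
    rw [hK]
    push_cast
    match_scalars <;> field_simp <;> ring_nf
  -- Λ generator splits
  have hsplit : ∀ t, adL (Hcal t) + ((Γ t : ℝ) : ℂ) • D
      = (adL (Hcal t - ((t / T : ℝ) : ℂ) • Hcal T) +
          (((Γ t - (t / T) * Γ T : ℝ)) : ℂ) • D) + t • X := by
    intro t
    rw [hPgen, htX, hadLHcal, hK]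
    push_cast
    match_scalars <;> ring
  constructor
  · intro t
    rw [hΛ, hP, hsplit t]
    rw [exp_add_of_commute_clm]
    · rfl
    · rw [hPgen, htX]
      exact ((hAK.symm.smul_right _).add_right ((Commute.refl K).smul_right _)).smul_left _
  · intro t
    have hH2 : Hcal (t + T) = Hcal t + Hcal T := by
      rw [hHcal, hHcal, hHcal, hΓadd]
      push_cast
      rw [mul_add]
      module
    have h1 : Hcal (t + T) - (((t + T) / T : ℝ) : ℂ) • Hcal T
        = Hcal t - ((t / T : ℝ) : ℂ) • Hcal T := by
      have hs : (((t + T) / T : ℝ) : ℂ) = ((t / T : ℝ) : ℂ) + 1 := by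
        push_cast
        rw [add_div, div_self hTC]
      rw [hH2, hs, add_smul, one_smul]
      abel
    have h2 : (Γ (t + T) - (t + T) / T * Γ T : ℝ) = (Γ t - t / T * Γ T : ℝ) := by
      rw [hΓadd]
      field_simp
      ring
    rw [hP, hP, h1, h2]
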